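/- Let the 4×4 integer matrix B̃ have rows (1,1,1,2), (1,-1,2,-1), (5,5,-2,-4), (5,-5,-4,2). Then the rows of B̃ are pairwise orthogonal, and for each s ∈ Z_4 and i ∈ [d-1], the state |λ_s⟩ = b_{s,0}|00ii⟩ + b_{s,1}|0ii0⟩ + b_{s,2}|ii00⟩ + b_{s,3}|i00i⟩ in (ℂ^d)^{⊗4} has Schmidt rank exactly 2 across the bipartitions A_1|A_2A_3A_4, A_2|A_1A_3A_4, A_3|A_1A_2A_4, A_4|A_1A_2A_3, A_1A_3|A_2A_4, and Schmidt rank exactly 4 across A_1A_2|A_3A_4 and A_1A_4|A_2A_3; in particular |λ_s⟩ is genuinely entangled. -/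

import Mathlib

theorem aux_sub_le {m n : Type*} [Fintype m] [DecidableEq m] [Fintype n] [DecidableEq n]
    {k k' : ℕ} (M : Matrix m n ℂ) (r : Fin k → m) (g : Fin k' → n) :
    (M.submatrix r g).rank ≤ M.rank := by
  have h : M.submatrix r g =
      (Matrix.of fun j a => if a = r j then (1:ℂ) else 0) * M *
      (Matrix.of fun x j => if x = g j then (1:ℂ) else 0) := by
    ext j j'
    simp [Matrix.mul_apply, Finset.sum_ite_eq, Finset.sum_ite_eq', ite_mul, mul_ite]
  rw [h]
  exact le_trans (Matrix.rank_mul_le_left _ _) (Matrix.rank_mul_le_right _ _)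

theorem aux_rank {m n : Type*} [Fintype m] [DecidableEq m] [Fintype n] [DecidableEq n]
    {k : ℕ} (M : Matrix m n ℂ) (r : Fin k → m) (g : Fin k → n)
    (h0 : ∀ a, (∀ j, a ≠ r j) → ∀ x, M a x = 0)
    (hdet : (M.submatrix r g).det ≠ 0) : M.rank = k := by
  have hr : Function.Injective r := by
    intro j j' h
    by_contra hne
    exact hdet (Matrix.det_zero_of_row_eq hne (by funext t; simp [h]))
  refine le_antisymm ?_ ?_
  · have hM : M = (Matrix.of fun a j => if a = r j then (1:ℂ) else 0) *
        (Matrix.of fun j x => M (r j) x) := by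
      ext a x
      rw [Matrix.mul_apply]
      by_cases h : ∀ j, a ≠ r j
      · rw [h0 a h x, eq_comm]
        apply Finset.sum_eq_zero
        intro j _
        simp [h j]
      · push_neg at h
        obtain ⟨j0, hj0⟩ := h
        rw [Finset.sum_eq_single_of_mem j0 (Finset.mem_univ _) ?_]
        · simp [hj0]
        · intro j _ hj
          have : a ≠ r j := fun hh => hj (hr (hh.symm.trans hj0))
          simp [this]
    have bound := Matrix.rank_mul_le_right
      (Matrix.of fun a j => if a = r j then (1:ℂ) else 0)
      (Matrix.of fun j x => M (r j) x)
    rw [← hM] at bound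
    exact bound.trans ((Matrix.rank_le_card_height _).trans (Fintype.card_fin k).le)
  · have h1 : (M.submatrix r g).rank = k := by
      rw [Matrix.rank_of_isUnit _ ((Matrix.isUnit_iff_isUnit_det _).mpr
        (isUnit_iff_ne_zero.mpr hdet)), Fintype.card_fin]
    rw [← h1]
    exact aux_sub_le M r g

/-- The rows of the 4×4 matrix B̃ = [(1,1,1,2),(1,-1,2,-1),(5,5,-2,-4),
(5,-5,-4,2)] are pairwise orthogonal, and for each row s and i ≠ 0 the state
|λ_s⟩ = b_{s,0}|00ii⟩ + b_{s,1}|0ii0⟩ + b_{s,2}|ii00⟩ + b_{s,3}|i00i⟩ in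
(ℂ^d)^{⊗4} has Schmidt rank exactly 2 across A_1|A_2A_3A_4, A_2|A_1A_3A_4,
A_3|A_1A_2A_4, A_4|A_1A_2A_3 and A_1A_3|A_2A_4, and Schmidt rank exactly 4
across A_1A_2|A_3A_4 and A_1A_4|A_2A_3; in particular it is genuinely
entangled. -/
theorem stmt18 (d : ℕ) [NeZero d] (hd : 2 ≤ d) (i : Fin d) (hi : i ≠ 0)
    (s : Fin 4) (Bt : Matrix (Fin 4) (Fin 4) ℂ)
    (hBt : Bt = !![1, 1, 1, 2; 1, -1, 2, -1; 5, 5, -2, -4; 5, -5, -4, 2])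
    (ψ : Fin d × Fin d × Fin d × Fin d → ℂ)
    (hψ : ψ = fun t => if t = (0, 0, i, i) then Bt s 0
      else if t = (0, i, i, 0) then Bt s 1
      else if t = (i, i, 0, 0) then Bt s 2
      else if t = (i, 0, 0, i) then Bt s 3 else 0) :
    (∀ u v : Fin 4, u ≠ v → ∑ j, Bt u j * Bt v j = 0) ∧
    (Matrix.of fun (a : Fin d) (x : Fin d × Fin d × Fin d) =>
      ψ (a, x.1, x.2.1, x.2.2)).rank = 2 ∧
    (Matrix.of fun (b : Fin d) (x : Fin d × Fin d × Fin d) =>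
      ψ (x.1, b, x.2.1, x.2.2)).rank = 2 ∧
    (Matrix.of fun (c : Fin d) (x : Fin d × Fin d × Fin d) =>
      ψ (x.1, x.2.1, c, x.2.2)).rank = 2 ∧
    (Matrix.of fun (e : Fin d) (x : Fin d × Fin d × Fin d) =>
      ψ (x.1, x.2.1, x.2.2, e)).rank = 2 ∧
    (Matrix.of fun (ac : Fin d × Fin d) (be : Fin d × Fin d) =>
      ψ (ac.1, be.1, ac.2, be.2)).rank = 2 ∧
    (Matrix.of fun (ab : Fin d × Fin d) (ce : Fin d × Fin d) =>
      ψ (ab.1, ab.2, ce.1, ce.2)).rank = 4 ∧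
    (Matrix.of fun (ae : Fin d × Fin d) (bc : Fin d × Fin d) =>
      ψ (ae.1, bc.1, bc.2, ae.2)).rank = 4 := by
  have h0i : (0 : Fin d) ≠ i := Ne.symm hi
  have hb : ∀ j : Fin 4, Bt s j ≠ 0 := by
    clear hψ
    rw [hBt]
    intro j
    fin_cases s <;> fin_cases j <;> norm_num
  have horth : ∀ u v : Fin 4, u ≠ v → ∑ j, Bt u j * Bt v j = 0 := by
    clear hψ hb
    rw [hBt]
    intro u v huv
    fin_cases u <;> fin_cases v <;>
      first
        | exact absurd rfl huv
        | norm_num [Fin.sum_univ_four, Matrix.cons_val_two, Matrix.cons_val_three, Matrix.tail_cons, Matrix.head_cons]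
  have hd2 : Bt s 0 * Bt s 2 - Bt s 1 * Bt s 3 ≠ 0 := by
    clear hψ hb horth
    rw [hBt]
    fin_cases s <;> norm_num [Matrix.cons_val_two, Matrix.cons_val_three, Matrix.tail_cons, Matrix.head_cons]
  refine ⟨horth, ?_, ?_, ?_, ?_, ?_, ?_, ?_⟩
  · -- A1
    apply aux_rank _ ![(0 : Fin d), i]
      ![((0:Fin d), i, i), ((0:Fin d), (0:Fin d), i)]
    · intro a hj x
      have e0 : a ≠ 0 := by simpa using hj 0
      have e1 : a ≠ i := by simpa using hj 1
      simp only [Matrix.of_apply, hψ]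
      split_ifs with h1 h2 h3 h4
      · exact absurd (congrArg Prod.fst h1) e0
      · exact absurd (congrArg Prod.fst h2) e0
      · exact absurd (congrArg Prod.fst h3) e1
      · exact absurd (congrArg Prod.fst h4) e1
      · rfl
    · simp only [Matrix.det_fin_two, Matrix.submatrix_apply, Matrix.cons_val_zero,
        Matrix.cons_val_one, Matrix.head_cons, Matrix.of_apply, hψ]
      simp [Prod.ext_iff, hi, h0i]
      exact ⟨hb 0, hb 3⟩
  · -- A2
    apply aux_rank _ ![(0 : Fin d), i]
      ![((0:Fin d), i, i), (i, (0:Fin d), (0:Fin d))]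
    · intro b hj x
      have e0 : b ≠ 0 := by simpa using hj 0
      have e1 : b ≠ i := by simpa using hj 1
      simp only [Matrix.of_apply, hψ]
      split_ifs with h1 h2 h3 h4
      · exact absurd (congrArg (fun t => t.2.1) h1) e0
      · exact absurd (congrArg (fun t => t.2.1) h2) e1
      · exact absurd (congrArg (fun t => t.2.1) h3) e1
      · exact absurd (congrArg (fun t => t.2.1) h4) e0
      · rfl
    · simp only [Matrix.det_fin_two, Matrix.submatrix_apply, Matrix.cons_val_zero,
        Matrix.cons_val_one, Matrix.head_cons, Matrix.of_apply, hψ]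
      simp [Prod.ext_iff, hi, h0i]
      exact ⟨hb 0, hb 2⟩
  · -- A3
    apply aux_rank _ ![(0 : Fin d), i]
      ![(i, i, (0:Fin d)), ((0:Fin d), (0:Fin d), i)]
    · intro c hj x
      have e0 : c ≠ 0 := by simpa using hj 0
      have e1 : c ≠ i := by simpa using hj 1
      simp only [Matrix.of_apply, hψ]
      split_ifs with h1 h2 h3 h4
      · exact absurd (congrArg (fun t => t.2.2.1) h1) e1
      · exact absurd (congrArg (fun t => t.2.2.1) h2) e1
      · exact absurd (congrArg (fun t => t.2.2.1) h3) e0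
      · exact absurd (congrArg (fun t => t.2.2.1) h4) e0
      · rfl
    · simp only [Matrix.det_fin_two, Matrix.submatrix_apply, Matrix.cons_val_zero,
        Matrix.cons_val_one, Matrix.head_cons, Matrix.of_apply, hψ]
      simp [Prod.ext_iff, hi, h0i]
      exact ⟨hb 2, hb 0⟩
  · -- A4
    apply aux_rank _ ![(0 : Fin d), i]
      ![((0:Fin d), i, i), ((0:Fin d), (0:Fin d), i)]
    · intro e hj x
      have e0 : e ≠ 0 := by simpa using hj 0
      have e1 : e ≠ i := by simpa using hj 1
      simp only [Matrix.of_apply, hψ]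
      split_ifs with h1 h2 h3 h4
      · exact absurd (congrArg (fun t => t.2.2.2) h1) e1
      · exact absurd (congrArg (fun t => t.2.2.2) h2) e0
      · exact absurd (congrArg (fun t => t.2.2.2) h3) e0
      · exact absurd (congrArg (fun t => t.2.2.2) h4) e1
      · rfl
    · simp only [Matrix.det_fin_two, Matrix.submatrix_apply, Matrix.cons_val_zero,
        Matrix.cons_val_one, Matrix.head_cons, Matrix.of_apply, hψ]
      simp [Prod.ext_iff, hi, h0i]
      exact ⟨hb 1, hb 0⟩
  · -- A1A3
    apply aux_rank _ ![((0:Fin d), i), (i, (0:Fin d))]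
      ![((0:Fin d), i), (i, (0:Fin d))]
    · rintro ⟨a, c⟩ hj ⟨b, e⟩
      have e0 : ¬(a = 0 ∧ c = i) := by simpa [Prod.ext_iff] using hj 0
      have e1 : ¬(a = i ∧ c = 0) := by simpa [Prod.ext_iff] using hj 1
      simp only [Matrix.of_apply, hψ]
      split_ifs with h1 h2 h3 h4
      · exact absurd ⟨congrArg Prod.fst h1, congrArg (fun t => t.2.2.1) h1⟩ e0
      · exact absurd ⟨congrArg Prod.fst h2, congrArg (fun t => t.2.2.1) h2⟩ e0
      · exact absurd ⟨congrArg Prod.fst h3, congrArg (fun t => t.2.2.1) h3⟩ e1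
      · exact absurd ⟨congrArg Prod.fst h4, congrArg (fun t => t.2.2.1) h4⟩ e1
      · rfl
    · simp only [Matrix.det_fin_two, Matrix.submatrix_apply, Matrix.cons_val_zero,
        Matrix.cons_val_one, Matrix.head_cons, Matrix.of_apply, hψ]
      simp [Prod.ext_iff, hi, h0i]
      simpa [sub_eq_zero] using hd2
  · -- A1A2 | A3A4
    apply aux_rank _ ![((0:Fin d), (0:Fin d)), ((0:Fin d), i), (i, i), (i, (0:Fin d))]
      ![(i, i), (i, (0:Fin d)), ((0:Fin d), (0:Fin d)), ((0:Fin d), i)]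
    · rintro ⟨a, b⟩ hj ⟨c, e⟩
      have e0 : ¬(a = 0 ∧ b = 0) := by simpa [Prod.ext_iff] using hj 0
      have e1 : ¬(a = 0 ∧ b = i) := by simpa [Prod.ext_iff] using hj 1
      have e2 : ¬(a = i ∧ b = i) := by simpa [Prod.ext_iff] using hj 2
      have e3 : ¬(a = i ∧ b = 0) := by simpa [Prod.ext_iff] using hj 3
      simp only [Matrix.of_apply, hψ]
      split_ifs with h1 h2 h3 h4
      · exact absurd ⟨congrArg Prod.fst h1, congrArg (fun t => t.2.1) h1⟩ e0
      · exact absurd ⟨congrArg Prod.fst h2, congrArg (fun t => t.2.1) h2⟩ e1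
      · exact absurd ⟨congrArg Prod.fst h3, congrArg (fun t => t.2.1) h3⟩ e2
      · exact absurd ⟨congrArg Prod.fst h4, congrArg (fun t => t.2.1) h4⟩ e3
      · rfl
    · have hsub : ((Matrix.of fun (ab : Fin d × Fin d) (ce : Fin d × Fin d) =>
          ψ (ab.1, ab.2, ce.1, ce.2)).submatrix
          ![((0:Fin d), (0:Fin d)), ((0:Fin d), i), (i, i), (i, (0:Fin d))]
          ![(i, i), (i, (0:Fin d)), ((0:Fin d), (0:Fin d)), ((0:Fin d), i)]) =
          Matrix.diagonal ![Bt s 0, Bt s 1, Bt s 2, Bt s 3] := by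
        ext j j'
        fin_cases j <;> fin_cases j' <;>
          simp [hψ, Matrix.diagonal_apply, Prod.ext_iff, hi, h0i]
      rw [hsub, Matrix.det_diagonal, Fin.prod_univ_four]
      simp only [Matrix.cons_val_zero, Matrix.cons_val_one, Matrix.head_cons,
        Matrix.cons_val_two, Matrix.cons_val_three, Matrix.tail_cons]
      exact mul_ne_zero (mul_ne_zero (mul_ne_zero (hb 0) (hb 1)) (hb 2)) (hb 3)
  · -- A1A4 | A2A3
    apply aux_rank _ ![((0:Fin d), i), ((0:Fin d), (0:Fin d)), (i, (0:Fin d)), (i, i)]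
      ![((0:Fin d), i), (i, i), (i, (0:Fin d)), ((0:Fin d), (0:Fin d))]
    · rintro ⟨a, e⟩ hj ⟨b, c⟩
      have e0 : ¬(a = 0 ∧ e = i) := by simpa [Prod.ext_iff] using hj 0
      have e1 : ¬(a = 0 ∧ e = 0) := by simpa [Prod.ext_iff] using hj 1
      have e2 : ¬(a = i ∧ e = 0) := by simpa [Prod.ext_iff] using hj 2
      have e3 : ¬(a = i ∧ e = i) := by simpa [Prod.ext_iff] using hj 3
      simp only [Matrix.of_apply, hψ]
      split_ifs with h1 h2 h3 h4
      · exact absurd ⟨congrArg Prod.fst h1, congrArg (fun t => t.2.2.2) h1⟩ e0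
      · exact absurd ⟨congrArg Prod.fst h2, congrArg (fun t => t.2.2.2) h2⟩ e1
      · exact absurd ⟨congrArg Prod.fst h3, congrArg (fun t => t.2.2.2) h3⟩ e2
      · exact absurd ⟨congrArg Prod.fst h4, congrArg (fun t => t.2.2.2) h4⟩ e3
      · rfl
    · have hsub : ((Matrix.of fun (ae : Fin d × Fin d) (bc : Fin d × Fin d) =>
          ψ (ae.1, bc.1, bc.2, ae.2)).submatrix
          ![((0:Fin d), i), ((0:Fin d), (0:Fin d)), (i, (0:Fin d)), (i, i)]
          ![((0:Fin d), i), (i, i), (i, (0:Fin d)), ((0:Fin d), (0:Fin d))]) =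
          Matrix.diagonal ![Bt s 0, Bt s 1, Bt s 2, Bt s 3] := by
        ext j j'
        fin_cases j <;> fin_cases j' <;>
          simp [hψ, Matrix.diagonal_apply, Prod.ext_iff, hi, h0i]
      rw [hsub, Matrix.det_diagonal, Fin.prod_univ_four]
      simp only [Matrix.cons_val_zero, Matrix.cons_val_one, Matrix.head_cons,
        Matrix.cons_val_two, Matrix.cons_val_three, Matrix.tail_cons]
      exact mul_ne_zero (mul_ne_zero (mul_ne_zero (hb 0) (hb 1)) (hb 2)) (hb 3)
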